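/- Let t, u be real numbers with t > 0 and u > 0, and for i ∈ ℕ set a_i = Σ_{m : 2m ≤ i} i!/((i−2m)!·m!·m!)·t^{i−2m}·u^m. Then there exists a constant c > 0 such that a_i ~ c·i^{−1/2}·(t + 2√u)^i as i → ∞; that is, the sequence a_i·√i/(t + 2√u)^i converges to c. -/

import Mathlib

open Filter Real

section BridgeAux

open MeasureTheory intervalIntegral Set

private lemma cosInt_rec (n : ℕ) : (∫ x in (-π)..π, cos x ^ (n+2)) =
    (n+1)/(n+2) * ∫ x in (-π)..π, cos x ^ n := by
  rw [integral_cos_pow]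
  simp [Real.sin_pi]

private lemma cosInt_odd (m : ℕ) : (∫ x in (-π)..π, cos x ^ (2*m+1)) = 0 := by
  induction m with
  | zero => simp
  | succ k ih =>
    have : 2*(k+1)+1 = (2*k+1) + 2 := by ring
    rw [this, cosInt_rec, ih, mul_zero]

private lemma cosInt_even (m : ℕ) : (∫ x in (-π)..π, cos x ^ (2*m)) =
    2*π * (Nat.choose (2*m) m) / 4^m := by
  induction m with
  | zero => simp [two_mul]
  | succ k ih =>
    have h1 : 2*(k+1) = (2*k) + 2 := by ring
    rw [h1, cosInt_rec, ih]
    have h2 : ((k:ℝ)+1) * (Nat.choose (2*k+2) (k+1)) = 2*(2*k+1) * Nat.choose (2*k) k := by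
      have := congrArg (Nat.cast : ℕ → ℝ) (Nat.succ_mul_centralBinom_succ k)
      push_cast [Nat.centralBinom, Nat.mul_succ] at this
      linear_combination this
    have hk : ((k:ℝ)+1) ≠ 0 := by positivity
    rw [pow_succ]
    field_simp
    push_cast
    linear_combination (-2:ℝ) * h2

private lemma sum_eq_integral (t v : ℝ) (i : ℕ) :
    ∑ m ∈ Finset.range (i/2+1),
        (Nat.factorial i : ℝ) /
            ((Nat.factorial (i - 2*m) : ℝ) * (Nat.factorial m : ℝ) * (Nat.factorial m : ℝ)) *
          t ^ (i - 2*m) * (v^2) ^ m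
      = (1/(2*π)) * ∫ θ in (-π)..π, (t + 2*v*Real.cos θ) ^ i := by
  have hπ : (π:ℝ) ≠ 0 := Real.pi_ne_zero
  set f : ℕ → ℝ := fun k => ((2*v)^k * t^(i-k) * (Nat.choose i k : ℝ)) * ∫ θ in (-π)..π, Real.cos θ ^ k with hf
  have hint : (∫ θ in (-π)..π, (t + 2*v*Real.cos θ) ^ i) = ∑ k ∈ Finset.range (i+1), f k := by
    have hexp : ∀ θ : ℝ, (t + 2*v*Real.cos θ) ^ i
        = ∑ k ∈ Finset.range (i+1), ((2*v)^k * t^(i-k) * (Nat.choose i k : ℝ)) * Real.cos θ ^ k := by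
      intro θ
      rw [add_comm, add_pow]
      refine Finset.sum_congr rfl fun k _ => ?_
      ring
    rw [intervalIntegral.integral_congr (fun θ _ => hexp θ)]
    rw [intervalIntegral.integral_finset_sum]
    · exact Finset.sum_congr rfl fun k _ => intervalIntegral.integral_const_mul _ _
    · intro k _
      apply Continuous.intervalIntegrable
      fun_prop
  have hodd : ∀ k, ¬ Even k → f k = 0 := by
    intro k hk
    obtain ⟨m, rfl⟩ := Nat.not_even_iff_odd.mp hk
    simp only [hf]
    rw [cosInt_odd, mul_zero]
  have hre : ∑ k ∈ Finset.range (i+1), f k = ∑ m ∈ Finset.range (i/2+1), f (2*m) := by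
    rw [← Finset.sum_filter_of_ne (p := fun k => Even k)
      (by intro x _ hx; by_contra h; exact hx (hodd x h))]
    refine Finset.sum_nbij' (fun k => k/2) (fun m => 2*m) ?_ ?_ ?_ ?_ ?_
    · intro a ha
      simp only [Finset.mem_filter, Finset.mem_range] at ha ⊢
      omega
    · intro b hb
      simp only [Finset.mem_filter, Finset.mem_range] at hb ⊢
      exact ⟨by omega, even_two_mul b⟩
    · intro a ha
      simp only [Finset.mem_filter, Finset.mem_range] at ha
      obtain ⟨-, n, rfl⟩ := ha
      omega
    · intro b hb
      omega
    · intro a ha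
      simp only [Finset.mem_filter, Finset.mem_range] at ha
      obtain ⟨-, n, rfl⟩ := ha
      congr 1
      omega
  rw [hint, hre, Finset.mul_sum]
  refine Finset.sum_congr rfl fun m hm => ?_
  have h2m : 2*m ≤ i := by
    simp only [Finset.mem_range] at hm
    omega
  have hc1 : (Nat.choose i (2*m) : ℝ) * (2*m).factorial * (i - 2*m).factorial = i.factorial := by
    exact_mod_cast congrArg (Nat.cast : ℕ → ℝ) (Nat.choose_mul_factorial_mul_factorial h2m)
  have hc2 : (Nat.choose (2*m) m : ℝ) * m.factorial * m.factorial = (2*m).factorial := by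
    have h := Nat.choose_mul_factorial_mul_factorial (by omega : m ≤ 2*m)
    rw [show 2*m - m = m from by omega] at h
    exact_mod_cast congrArg (Nat.cast : ℕ → ℝ) h
  have hfac : ∀ n : ℕ, (Nat.factorial n : ℝ) ≠ 0 := fun n => by
    exact_mod_cast Nat.factorial_ne_zero n
  simp only [hf]
  rw [cosInt_even]
  have h4 : ((2*v)^(2*m) : ℝ) = 4^m * v^(2*m) := by
    rw [mul_pow, pow_mul]; norm_num
  have hv2 : ((v^2)^m : ℝ) = v^(2*m) := by rw [← pow_mul]
  have h4ne : ((4:ℝ)^m) ≠ 0 := by positivity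
  have hc3 : (Nat.factorial i : ℝ) = (Nat.choose i (2*m)) * ((2*m).choose m)
      * ((Nat.factorial (i-2*m) : ℝ) * (Nat.factorial m : ℝ) * (Nat.factorial m : ℝ)) := by
    linear_combination (-1 : ℝ) * hc1
      - ((Nat.choose i (2*m) : ℝ) * (Nat.factorial (i-2*m) : ℝ)) * hc2
  rw [h4, hv2, hc3]
  have hA : (Nat.factorial (i-2*m) : ℝ) * (Nat.factorial m : ℝ) * (Nat.factorial m : ℝ) ≠ 0 := by
    have := hfac (i-2*m); have := hfac m; positivity
  field_simp

private lemma hcos_bound {θ : ℝ} (h : |θ| ≤ π) : 2*θ^2 ≤ π^2 * (1 - Real.cos θ) := by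
  have h0 : 0 ≤ |θ| := abs_nonneg θ
  have hπ := Real.pi_pos
  have h2 : |θ|/2 ≤ π/2 := by linarith
  have hs := Real.mul_le_sin (x := |θ|/2) (by positivity) h2
  have hs' : |θ|/π ≤ Real.sin (|θ|/2) := by
    calc |θ|/π = 2/π * (|θ|/2) := by ring
    _ ≤ _ := hs
  have hsin0 : 0 ≤ Real.sin (|θ|/2) := le_trans (by positivity) hs'
  have hss : (|θ|/π)*(|θ|/π) ≤ Real.sin (|θ|/2) * Real.sin (|θ|/2) :=
    mul_le_mul hs' hs' (by positivity) hsin0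
  have hct := Real.cos_two_mul (|θ|/2)
  rw [show 2*(|θ|/2) = |θ| by ring] at hct
  have hpy := Real.sin_sq_add_cos_sq (|θ|/2)
  have habs : Real.cos θ = Real.cos |θ| := (Real.cos_abs θ).symm
  have hsq : |θ| * |θ| = θ^2 := by rw [← sq_abs θ]; ring
  have hd : (|θ|/π)*(|θ|/π) = θ^2/π^2 := by rw [div_mul_div_comm, hsq]; ring_nf
  rw [habs, hct]
  have hπ2 : (0:ℝ) < π^2 := by positivity
  have : θ^2/π^2 ≤ Real.sin (|θ|/2)^2 := by rw [← hd]; nlinarith [hss]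
  have h3 : θ^2 ≤ π^2 * Real.sin (|θ|/2)^2 := by
    rw [div_le_iff₀ hπ2] at this; linarith
  nlinarith [h3, hpy, sq_nonneg (Real.sin (|θ|/2)), sq_nonneg (Real.cos (|θ|/2))]

private lemma abs_bound {t v : ℝ} (ht : 0 < t) (hv : 0 < v) {θ : ℝ} (h : |θ| ≤ π) :
    |t + 2*v*Real.cos θ| ≤ (t + 2*v) - (min t v/π^2) * θ^2 := by
  have hπ := Real.pi_pos
  have hπ2 : (0:ℝ) < π^2 := by positivity
  have hc := hcos_bound h
  have hθ2 : θ^2 ≤ π^2 := by nlinarith [sq_abs θ, abs_nonneg θ, abs_nonneg θ]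
  have hmt : min t v ≤ t := min_le_left t v
  have hmv : min t v ≤ v := min_le_right t v
  have hmin0 : 0 < min t v := lt_min ht hv
  have hcos1 : Real.cos θ ≤ 1 := Real.cos_le_one θ
  have hcosm : -1 ≤ Real.cos θ := Real.neg_one_le_cos θ
  rw [abs_le]
  constructor
  · have h1 : (min t v/π^2) * θ^2 ≤ t := by
      rw [div_mul_eq_mul_div, div_le_iff₀ hπ2]
      nlinarith
    nlinarith
  · have h2 : (min t v/π^2) * θ^2 ≤ (2*v/π^2)*(2*θ^2) := by
      rw [div_mul_eq_mul_div, div_le_iff₀ hπ2]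
      have : (2*v/π^2)*(2*θ^2)*π^2 = 4*v*θ^2 := by field_simp; ring
      rw [this]
      nlinarith [sq_nonneg θ]
    have h3 : (2*v/π^2)*(2*θ^2) ≤ (2*v/π^2)*(π^2*(1 - Real.cos θ)) := by
      apply mul_le_mul_of_nonneg_left hc (by positivity)
    have h4 : (2*v/π^2)*(π^2*(1 - Real.cos θ)) = 2*v*(1 - Real.cos θ) := by
      field_simp
    nlinarith

private lemma slope_sin_lim : Tendsto (fun y : ℝ => Real.sin y / y) (nhdsWithin 0 {0}ᶜ) (nhds 1) := by
  have h := Real.hasDerivAt_sin 0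
  rw [hasDerivAt_iff_tendsto_slope] at h
  rw [Real.cos_zero] at h
  refine h.congr' ?_
  filter_upwards [self_mem_nhdsWithin] with y hy
  simp [slope_def_field, Real.sin_zero]

private lemma cos_sub_one_div_sq_lim :
    Tendsto (fun θ : ℝ => (Real.cos θ - 1) / θ ^ 2) (nhdsWithin 0 {0}ᶜ) (nhds (-(1/2))) := by
  have hhalf : Tendsto (fun θ : ℝ => θ / 2) (nhdsWithin 0 {0}ᶜ) (nhdsWithin 0 {0}ᶜ) := by
    apply tendsto_nhdsWithin_of_tendsto_nhds_of_eventually_within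
    · have : Tendsto (fun θ : ℝ => θ / 2) (nhds 0) (nhds (0/2)) :=
        (continuous_id.div_const 2).continuousAt
      simpa using this.mono_left nhdsWithin_le_nhds
    · filter_upwards [self_mem_nhdsWithin] with θ hθ
      simp only [Set.mem_compl_iff, Set.mem_singleton_iff] at hθ ⊢
      intro hc; exact hθ (by linarith)
  have h2 := slope_sin_lim.comp hhalf
  have h3 : Tendsto (fun θ : ℝ => -(1/2) * (Real.sin (θ/2) / (θ/2)) ^ 2)
      (nhdsWithin 0 {0}ᶜ) (nhds (-(1/2) * 1 ^ 2)) := (h2.pow 2).const_mul _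
  rw [one_pow, mul_one] at h3
  refine h3.congr' ?_
  filter_upwards [self_mem_nhdsWithin] with θ hθ
  simp only [Set.mem_compl_iff, Set.mem_singleton_iff] at hθ
  have hct := Real.cos_two_mul (θ/2)
  rw [show 2*(θ/2) = θ by ring] at hct
  have hpy := Real.sin_sq_add_cos_sq (θ/2)
  have hkey : Real.cos θ - 1 = -2 * Real.sin (θ/2) ^ 2 := by nlinarith
  rw [div_pow, hkey]
  field_simp

private lemma log_one_add_div_lim :
    Tendsto (fun y : ℝ => Real.log (1 + y) / y) (nhdsWithin 0 {0}ᶜ) (nhds 1) := by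
  have h := Real.hasDerivAt_log (one_ne_zero)
  rw [hasDerivAt_iff_tendsto_slope] at h
  norm_num at h
  have hshift : Tendsto (fun y : ℝ => 1 + y) (nhdsWithin 0 {0}ᶜ) (nhdsWithin 1 {1}ᶜ) := by
    apply tendsto_nhdsWithin_of_tendsto_nhds_of_eventually_within
    · have : Tendsto (fun y : ℝ => 1 + y) (nhds 0) (nhds (1 + 0)) :=
        (continuous_const.add continuous_id).continuousAt
      simpa using this.mono_left nhdsWithin_le_nhds
    · filter_upwards [self_mem_nhdsWithin] with y hy
      simp only [Set.mem_compl_iff, Set.mem_singleton_iff] at hy ⊢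
      intro hc; exact hy (by linarith)
  have h2 := h.comp hshift
  refine h2.congr' ?_
  filter_upwards [self_mem_nhdsWithin] with y hy
  simp only [Set.mem_compl_iff, Set.mem_singleton_iff] at hy
  simp only [Function.comp, slope_def_field, Real.log_one]
  rw [show (1:ℝ) + y - 1 = y by ring]
  simp [Real.log_one]

private lemma log_g_lim {t v : ℝ} (ht : 0 < t) (hv : 0 < v) :
    Tendsto (fun θ : ℝ => Real.log ((t + 2*v*Real.cos θ)/(t + 2*v)) / θ ^ 2)
      (nhdsWithin 0 {0}ᶜ) (nhds (-(v/(t + 2*v)))) := by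
  have hf0 : (0:ℝ) < t + 2*v := by linarith
  set w : ℝ → ℝ := fun θ => 2*v*(Real.cos θ - 1)/(t + 2*v) with hw
  have hπ := Real.pi_pos
  have hevent : ∀ᶠ θ in nhdsWithin (0:ℝ) {0}ᶜ, w θ ≠ 0 ∧ θ ≠ 0 := by
    have habs : ∀ᶠ θ : ℝ in nhds 0, |θ| < π := by
      have := eventually_abs_sub_lt (0:ℝ) hπ
      simpa using this
    filter_upwards [self_mem_nhdsWithin,
      eventually_nhdsWithin_of_eventually_nhds habs] with θ hθ habsθ
    simp only [Set.mem_compl_iff, Set.mem_singleton_iff] at hθ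
    refine ⟨?_, hθ⟩
    have hcb := hcos_bound habsθ.le
    have hθ2 : 0 < θ^2 := by positivity
    have hcos : Real.cos θ - 1 < 0 := by nlinarith
    simp only [hw]
    intro hc
    have : 2*v*(Real.cos θ - 1) = 0 := by
      field_simp at hc
      linarith [hc]
    nlinarith
  have hw0 : Tendsto w (nhdsWithin 0 {0}ᶜ) (nhdsWithin 0 {0}ᶜ) := by
    apply tendsto_nhdsWithin_of_tendsto_nhds_of_eventually_within
    · have hc : Continuous w := by simp only [hw]; fun_prop
      have := (hc.tendsto 0).mono_left (nhdsWithin_le_nhds (s := {0}ᶜ))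
      simpa [hw] using this
    · filter_upwards [hevent] with θ hθ using hθ.1
  have h1 := log_one_add_div_lim.comp hw0
  have h2 : Tendsto (fun θ : ℝ => (2*v/(t+2*v)) * ((Real.cos θ - 1)/θ^2))
      (nhdsWithin 0 {0}ᶜ) (nhds ((2*v/(t+2*v)) * (-(1/2)))) :=
    cos_sub_one_div_sq_lim.const_mul _
  have h3 := h1.mul h2
  rw [one_mul] at h3
  have hval : (2*v/(t+2*v)) * (-(1/2)) = -(v/(t+2*v)) := by ring
  rw [hval] at h3
  refine h3.congr' ?_
  filter_upwards [hevent] with θ hθ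
  obtain ⟨hwne, hθne⟩ := hθ
  have hg : (t + 2*v*Real.cos θ)/(t + 2*v) = 1 + w θ := by
    simp only [hw]; field_simp; ring
  simp only [Function.comp]
  rw [hg]
  have hwdiv : (2*v/(t+2*v))*((Real.cos θ-1)/θ^2) = w θ/θ^2 := by
    simp only [hw]; ring
  rw [hwdiv, div_mul_div_comm, mul_comm (Real.log (1 + w θ)) (w θ),
    mul_div_mul_left _ _ hwne]

private lemma ptlim {t v : ℝ} (ht : 0 < t) (hv : 0 < v) (x : ℝ) :
    Tendsto (fun i : ℕ => ((t + 2*v*Real.cos (x / Real.sqrt i))/(t + 2*v)) ^ i)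
      atTop (nhds (Real.exp (-(v/(t + 2*v)) * x ^ 2))) := by
  have hf0 : (0:ℝ) < t + 2*v := by linarith
  by_cases hx : x = 0
  · subst hx
    simp only [zero_div, Real.cos_zero, mul_one]
    rw [div_self hf0.ne']
    simpa using tendsto_const_nhds (α := ℝ) (x := 1) (f := atTop (α := ℕ))
  · have hsqrt : Tendsto (fun i : ℕ => Real.sqrt i) atTop atTop := by
      have h1 := (tendsto_rpow_atTop (by norm_num : (0:ℝ) < 1/2)).comp
        tendsto_natCast_atTop_atTop
      refine h1.congr fun i => ?_
      simp [Real.sqrt_eq_rpow]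
    have hθ0 : Tendsto (fun i : ℕ => x / Real.sqrt i) atTop (nhds 0) := by
      simpa using tendsto_const_nhds.div_atTop hsqrt (f := fun _ : ℕ => x)
    have hθ : Tendsto (fun i : ℕ => x / Real.sqrt i) atTop (nhdsWithin 0 {0}ᶜ) := by
      apply tendsto_nhdsWithin_of_tendsto_nhds_of_eventually_within _ hθ0
      filter_upwards [eventually_ge_atTop 1] with i hi
      have : (0:ℝ) < Real.sqrt i := Real.sqrt_pos.mpr (by exact_mod_cast hi)
      simp only [Set.mem_compl_iff, Set.mem_singleton_iff]
      exact div_ne_zero hx this.ne'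
    have hcomp := (log_g_lim ht hv).comp hθ
    have hmul := hcomp.const_mul (x^2)
    have heq : ∀ᶠ i : ℕ in atTop,
        x^2 * ((fun θ : ℝ => Real.log ((t + 2*v*Real.cos θ)/(t + 2*v)) / θ ^ 2)
            ((fun i : ℕ => x / Real.sqrt i) i))
          = (i : ℝ) * Real.log ((t + 2*v*Real.cos (x / Real.sqrt i))/(t + 2*v)) := by
      filter_upwards [eventually_ge_atTop 1] with i hi
      have hipos : (0:ℝ) < (i:ℝ) := by exact_mod_cast hi
      have hsq : (x / Real.sqrt i) ^ 2 = x^2 / i := by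
        rw [div_pow, Real.sq_sqrt hipos.le]
      show x^2 * (Real.log ((t + 2*v*Real.cos (x / Real.sqrt i))/(t + 2*v)) / (x / Real.sqrt i)^2) = _
      rw [hsq]
      have hx2 : x^2 ≠ 0 := pow_ne_zero 2 hx
      field_simp
    have hmul2 : Tendsto (fun i : ℕ =>
        (i : ℝ) * Real.log ((t + 2*v*Real.cos (x / Real.sqrt i))/(t + 2*v)))
        atTop (nhds (-(v/(t + 2*v)) * x^2)) := by
      have := hmul.congr' heq
      simpa [mul_comm] using this
    have hexp := (Real.continuous_exp.tendsto _).comp hmul2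
    refine hexp.congr' ?_
    have hgpos : ∀ᶠ i : ℕ in atTop, 0 < (t + 2*v*Real.cos (x / Real.sqrt i))/(t + 2*v) := by
      have hgc : Tendsto (fun i : ℕ => (t + 2*v*Real.cos (x / Real.sqrt i))/(t + 2*v))
          atTop (nhds ((t + 2*v*Real.cos 0)/(t + 2*v))) := by
        have hcont : Continuous fun θ : ℝ => (t + 2*v*Real.cos θ)/(t + 2*v) := by fun_prop
        exact (hcont.tendsto 0).comp hθ0
      have : (t + 2*v*Real.cos 0)/(t + 2*v) = 1 := by
        rw [Real.cos_zero]; field_simp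
      rw [this] at hgc
      exact hgc.eventually (eventually_gt_nhds one_pos)
    filter_upwards [hgpos] with i hgi
    simp only [Function.comp]
    rw [Real.exp_nat_mul, Real.exp_log hgi]

private lemma laplace_core {t v : ℝ} (ht : 0 < t) (hv : 0 < v) :
    Tendsto (fun i : ℕ => ∫ x : ℝ, Set.indicator (Set.Ioc (-(π*Real.sqrt i)) (π*Real.sqrt i))
        (fun x => ((t + 2*v*Real.cos (x / Real.sqrt i))/(t + 2*v)) ^ i) x)
      atTop (nhds (Real.sqrt (π / (v/(t + 2*v))))) := by
  have hf0 : (0:ℝ) < t + 2*v := by linarith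
  have hπ := Real.pi_pos
  set c' : ℝ := min t v / (π^2 * (t + 2*v)) with hc'
  have hc'pos : 0 < c' := by
    have : 0 < min t v := lt_min ht hv
    positivity
  have hgauss : (∫ x : ℝ, Real.exp (-(v/(t+2*v)) * x^2)) = Real.sqrt (π / (v/(t+2*v))) := by
    exact integral_gaussian (v/(t+2*v))
  rw [← hgauss]
  apply MeasureTheory.tendsto_integral_filter_of_dominated_convergence
    (bound := fun x : ℝ => Real.exp (-c' * x^2))
  · filter_upwards with i
    apply AEStronglyMeasurable.indicator _ measurableSet_Ioc
    apply Continuous.aestronglyMeasurable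
    fun_prop
  · filter_upwards [eventually_ge_atTop 1] with i hi
    apply Eventually.of_forall
    intro x
    by_cases hx : x ∈ Set.Ioc (-(π*Real.sqrt i)) (π*Real.sqrt i)
    · rw [Set.indicator_of_mem hx]
      have hipos : (0:ℝ) < (i:ℝ) := by exact_mod_cast hi
      have hsipos : (0:ℝ) < Real.sqrt i := Real.sqrt_pos.mpr hipos
      set θ := x / Real.sqrt i with hθdef
      have hθπ : |θ| ≤ π := by
        rw [abs_div, abs_of_pos hsipos, div_le_iff₀ hsipos]
        rw [Set.mem_Ioc] at hx
        rw [abs_le]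
        constructor <;> nlinarith [hx.1, hx.2]
      have hb := abs_bound ht hv hθπ
      have hgb : |(t + 2*v*Real.cos θ)/(t + 2*v)| ≤ 1 - c' * θ^2 := by
        rw [abs_div, abs_of_pos hf0, div_le_iff₀ hf0, hc']
        have : (1 - min t v / (π ^ 2 * (t + 2 * v)) * θ ^ 2) * (t + 2*v)
            = (t + 2*v) - (min t v/π^2) * θ^2 := by
          field_simp
        rw [this]
        exact hb
      have h01 : 0 ≤ 1 - c' * θ^2 := le_trans (abs_nonneg _) hgb
      have hexp1 : 1 - c' * θ^2 ≤ Real.exp (-(c' * θ^2)) := by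
        have := Real.add_one_le_exp (-(c' * θ^2))
        linarith
      have hθsq : (i:ℝ) * θ^2 = x^2 := by
        rw [hθdef, div_pow, Real.sq_sqrt hipos.le]
        field_simp
      calc ‖((t + 2*v*Real.cos θ)/(t + 2*v)) ^ i‖
          = |(t + 2*v*Real.cos θ)/(t + 2*v)| ^ i := by
            rw [Real.norm_eq_abs, abs_pow]
        _ ≤ (1 - c' * θ^2) ^ i := pow_le_pow_left₀ (abs_nonneg _) hgb i
        _ ≤ (Real.exp (-(c' * θ^2))) ^ i := pow_le_pow_left₀ h01 hexp1 i
        _ = Real.exp (-c' * x^2) := by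
            rw [← Real.exp_nat_mul, ← hθsq]
            ring_nf
    · rw [Set.indicator_of_notMem hx]
      simp [Real.exp_nonneg]
  · exact integrable_exp_neg_mul_sq hc'pos
  · apply Eventually.of_forall
    intro x
    have hx : ∀ᶠ i : ℕ in atTop, x ∈ Set.Ioc (-(π*Real.sqrt i)) (π*Real.sqrt i) := by
      have hsqrt : Tendsto (fun i : ℕ => π * Real.sqrt i) atTop atTop := by
        apply Tendsto.const_mul_atTop hπ
        have h1 := (tendsto_rpow_atTop (by norm_num : (0:ℝ) < 1/2)).comp
          tendsto_natCast_atTop_atTop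
        refine h1.congr fun i => ?_
        simp [Real.sqrt_eq_rpow]
      filter_upwards [hsqrt.eventually_gt_atTop |x|] with i hi
      rw [Set.mem_Ioc]
      cases abs_lt.mp hi with
      | intro h1 h2 => exact ⟨by linarith, by linarith⟩
    refine (ptlim ht hv x).congr' ?_
    filter_upwards [hx] with i hxi
    rw [Set.indicator_of_mem hxi]

end BridgeAux

/-- For `t, u > 0`, the coefficients
`a_i = Σ_{2m ≤ i} B_{i−2m,m}·t^{i−2m}·u^m` of `1/√(1 − 2ts + t²s² − 4us²)` satisfy
`a_i ~ c·i^{−1/2}·(t + 2√u)^i` for some `c > 0`. -/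
theorem bridge_diagonal_asymptotics (t u : ℝ) (ht : 0 < t) (hu : 0 < u) :
    ∃ c : ℝ, 0 < c ∧
      Tendsto
        (fun i : ℕ =>
          (∑ m ∈ Finset.range (i / 2 + 1),
              (Nat.factorial i : ℝ) /
                  ((Nat.factorial (i - 2 * m) : ℝ) * (Nat.factorial m : ℝ) *
                    (Nat.factorial m : ℝ)) *
                t ^ (i - 2 * m) * u ^ m) *
            Real.sqrt i / (t + 2 * Real.sqrt u) ^ i)
        atTop (nhds c) := by
  set v : ℝ := Real.sqrt u with hvdef
  have hv : 0 < v := Real.sqrt_pos.mpr hu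
  have hf0 : (0:ℝ) < t + 2*v := by linarith
  have hπ := Real.pi_pos
  have hu2 : u = v^2 := (Real.sq_sqrt hu.le).symm
  refine ⟨(1/(2*π)) * Real.sqrt (π / (v/(t + 2*v))), ?_, ?_⟩
  · have h1 : 0 < π / (v/(t+2*v)) := by positivity
    have h2 := Real.sqrt_pos.mpr h1
    positivity
  · have hmain := (laplace_core ht hv).const_mul (1/(2*π))
    refine hmain.congr' ?_
    filter_upwards [eventually_ge_atTop 1] with i hi
    have hipos : (0:ℝ) < (i:ℝ) := by exact_mod_cast hi
    have hsi : (0:ℝ) < Real.sqrt i := Real.sqrt_pos.mpr hipos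
    have hE : (∫ x : ℝ, Set.indicator (Set.Ioc (-(π*Real.sqrt i)) (π*Real.sqrt i))
          (fun x => ((t + 2*v*Real.cos (x / Real.sqrt i))/(t + 2*v)) ^ i) x)
        = Real.sqrt i * ((∫ θ in (-π)..π, (t + 2*v*Real.cos θ)^i) / (t+2*v)^i) := by
      rw [MeasureTheory.integral_indicator measurableSet_Ioc]
      rw [← intervalIntegral.integral_of_le (by nlinarith : -(π*Real.sqrt i) ≤ π*Real.sqrt i)]
      rw [intervalIntegral.integral_comp_div
        (f := fun θ => ((t + 2*v*Real.cos θ)/(t+2*v))^i) hsi.ne']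
      have e1 : (-(π*Real.sqrt i))/Real.sqrt i = -π := by field_simp
      have e2 : (π*Real.sqrt i)/Real.sqrt i = π := by field_simp
      rw [e1, e2, smul_eq_mul]
      congr 1
      rw [← intervalIntegral.integral_div]
      apply intervalIntegral.integral_congr
      intro θ _
      simp [div_pow]
    rw [hE, hu2]
    rw [sum_eq_integral t v i]
    ring
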